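/- Let μ_1, …, μ_k be a sequence of roots of the root pairing (in the paper, simple roots; repetitions allowed), and let λ ∈ M be a weight. For ε ∈ {0,1}^k set v_i(ε) = ∏_{1 ≤ j ≤ i, ε_j = 1} s_{μ_j} ∈ W (product of the reflections taken in increasing order of j, the empty product being the identity), v(ε) = v_k(ε), and α_i(ε) = v_i(ε)·μ_i ∈ M; set R^{λ,ε} = T_{μ_1}^{ε_1} ∘ T_{μ_2}^{ε_2} ∘ ⋯ ∘ T_{μ_k}^{ε_k}(e^λ) ∈ ℤ[M] (so T_{μ_k}^{ε_k} is applied first). Order {0,1}^k by ε ≤ ε′ iff ε_i = 1 implies ε′_i = 1 for all i. Then for every ε ∈ {0,1}^k: e^{v(ε)λ} = ∑_{ε′ ∈ {0,1}^k, ε ≤ ε′} R^{λ,ε′} · ∏_{1 ≤ i ≤ k, ε′_i = 0} (1 − e^{−α_i(ε)}). -/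

import Mathlib

/-- The basis element `e^λ` of the group algebra `ℤ[M]`. -/
noncomputable def expWeight {M : Type*} [AddCommGroup M] (lam : M) :
    AddMonoidAlgebra ℤ M :=
  AddMonoidAlgebra.single lam 1

/-- The value of the Demazure operator `T_β^0` on the basis element `e^λ`,
for the root `β = P.root i`. -/
noncomputable def demazureTerm {ι M N : Type*} [AddCommGroup M] [AddCommGroup N]
    (P : RootPairing ι ℤ M N) (i : ι) (lam : M) : AddMonoidAlgebra ℤ M :=
  if 0 < P.coroot' i lam then
    ∑ j ∈ Finset.range (P.coroot' i lam).toNat, expWeight (lam - (j : ℤ) • P.root i)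
  else if P.coroot' i lam < 0 then
    -∑ j ∈ Finset.Icc 1 (-(P.coroot' i lam)).toNat, expWeight (lam + (j : ℤ) • P.root i)
  else 0

/-- The Demazure operator `T_β^0 : ℤ[M] → ℤ[M]` for the root `β = P.root i`. -/
noncomputable def TZero {ι M N : Type*} [AddCommGroup M] [AddCommGroup N]
    (P : RootPairing ι ℤ M N) (i : ι) :
    AddMonoidAlgebra ℤ M →ₗ[ℤ] AddMonoidAlgebra ℤ M :=
  Finsupp.lift (AddMonoidAlgebra ℤ M) ℤ M (demazureTerm P i) ∘ₗ
    (AddMonoidAlgebra.coeffLinearEquiv ℤ).toLinearMap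

/-- The operator `T_β^1 : ℤ[M] → ℤ[M]`, `e^λ ↦ e^{s_β λ}`, for the root `β = P.root i`. -/
noncomputable def TOne {ι M N : Type*} [AddCommGroup M] [AddCommGroup N]
    (P : RootPairing ι ℤ M N) (i : ι) :
    AddMonoidAlgebra ℤ M →ₗ[ℤ] AddMonoidAlgebra ℤ M :=
  Finsupp.lift (AddMonoidAlgebra ℤ M) ℤ M (fun lam => expWeight (P.reflection i lam)) ∘ₗ
    (AddMonoidAlgebra.coeffLinearEquiv ℤ).toLinearMap

/-- `T_β^ε`: the operator `T_β^1` if `ε = 1` (`true`) and the Demazure operator `T_β^0`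
if `ε = 0` (`false`). -/
noncomputable def Tsel {ι M N : Type*} [AddCommGroup M] [AddCommGroup N]
    (P : RootPairing ι ℤ M N) (i : ι) :
    Bool → (AddMonoidAlgebra ℤ M →ₗ[ℤ] AddMonoidAlgebra ℤ M)
  | true => TOne P i
  | false => TZero P i

/-- The coefficient `R^{λ,ε}_{μ_1,…,μ_k} = T_{μ_1}^{ε_1} ∘ ⋯ ∘ T_{μ_k}^{ε_k} (e^λ)`
(the operator `T_{μ_k}^{ε_k}` is applied first). -/
noncomputable def Rcoef {ι M N : Type*} [AddCommGroup M] [AddCommGroup N]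
    (P : RootPairing ι ℤ M N) {k : ℕ} (μ : Fin k → ι) (ε : Fin k → Bool) (lam : M) :
    AddMonoidAlgebra ℤ M :=
  ((List.finRange k).map fun j => Tsel P (μ j) (ε j)).foldr (fun T x => T x)
    (expWeight lam)

/-- `v_m(ε) = ∏_{1 ≤ j ≤ m, ε_j = 1} s_{μ_j}` (product of reflections taken in increasing
order of `j`, here over the first `m` indices `j` with `ε_j = 1`). -/
noncomputable def weylUpTo {ι M N : Type*} [AddCommGroup M] [AddCommGroup N]
    (P : RootPairing ι ℤ M N) {k : ℕ} (μ : Fin k → ι) (ε : Fin k → Bool) (m : ℕ) :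
    M ≃ₗ[ℤ] M :=
  (((((List.finRange k).take m).filter fun j => ε j).map
    fun j => P.reflection (μ j))).prod


section Aux

variable {ι M N : Type*} [AddCommGroup M] [AddCommGroup N] (P : RootPairing ι ℤ M N) (i : ι)

lemma expWeight_mul (a b : M) : expWeight a * expWeight b = expWeight (a + b) := by
  simp [expWeight, AddMonoidAlgebra.single_mul_single]

lemma single_eq_smul_exp (a : M) (b : ℤ) :
    (AddMonoidAlgebra.single a b : AddMonoidAlgebra ℤ M) = b • expWeight a := by
  rw [expWeight, AddMonoidAlgebra.smul_single, smul_eq_mul, mul_one]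

lemma TOne_exp (lam : M) : TOne P i (expWeight lam) = expWeight (P.reflection i lam) := by
  rw [TOne, expWeight]
  change Finsupp.lift (AddMonoidAlgebra ℤ M) ℤ M _ (Finsupp.single lam 1) = _
  erw [Finsupp.lift_apply, Finsupp.sum_single_index (by simp), one_smul]

lemma TZero_exp (lam : M) : TZero P i (expWeight lam) = demazureTerm P i lam := by
  rw [TZero, expWeight]
  change Finsupp.lift (AddMonoidAlgebra ℤ M) ℤ M _ (Finsupp.single lam 1) = _
  erw [Finsupp.lift_apply, Finsupp.sum_single_index (by simp), one_smul]

lemma TOne_mul (x y : AddMonoidAlgebra ℤ M) :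
    TOne P i (x * y) = TOne P i x * TOne P i y := by
  induction x using AddMonoidAlgebra.induction_linear with
  | zero => simp
  | add f g hf hg => simp [add_mul, hf, hg]
  | single a b =>
    induction y using AddMonoidAlgebra.induction_linear with
    | zero => simp
    | add f g hf hg => simp [mul_add, hf, hg]
    | single c d =>
      rw [single_eq_smul_exp, single_eq_smul_exp, smul_mul_assoc, mul_smul_comm,
        expWeight_mul, map_smul, map_smul, map_smul, map_smul, TOne_exp, TOne_exp, TOne_exp,
        map_add, smul_mul_assoc, mul_smul_comm, expWeight_mul]

lemma TOne_one : TOne P i (1 : AddMonoidAlgebra ℤ M) = 1 := by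
  have : (1 : AddMonoidAlgebra ℤ M) = expWeight 0 := rfl
  rw [this, TOne_exp]; simp [expWeight]

lemma key_exp (lam : M) :
    expWeight (P.reflection i lam)
      + demazureTerm P i lam * (1 - expWeight (-(P.root i))) = expWeight lam := by
  set n : ℤ := P.coroot' i lam with hn
  have hrefl : P.reflection i lam = lam - n • P.root i := by
    rw [RootPairing.reflection_apply]
  have hfac : ∀ m : M, expWeight m * (1 - expWeight (-(P.root i)))
      = expWeight m - expWeight (m - P.root i) := by
    intro m
    rw [mul_sub, mul_one, expWeight_mul, ← sub_eq_add_neg]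
  rcases lt_trichotomy n 0 with h | h | h
  · rw [demazureTerm, if_neg (by omega), if_pos (by omega : P.coroot' i lam < 0)]
    have hm : ((-n).toNat : ℤ) = -n := Int.toNat_of_nonneg (by omega)
    set m := (-n).toNat with hmdef
    rw [neg_mul, Finset.sum_mul]
    have hIcc : Finset.Icc 1 m = Finset.Ico 1 (m + 1) := by
      rw [Finset.Ico_add_one_right_eq_Icc]
    have hstep : ∀ j : ℕ,
        expWeight (lam + ((1 + j : ℕ) : ℤ) • P.root i) * (1 - expWeight (-(P.root i)))
        = expWeight (lam + ((j + 1 : ℕ) : ℤ) • P.root i)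
          - expWeight (lam + ((j : ℕ) : ℤ) • P.root i) := by
      intro j
      rw [hfac]
      congr 2
      · congr 2; push_cast; ring
      · push_cast; module
    rw [hIcc, Finset.sum_Ico_eq_sum_range]
    simp only [add_tsub_cancel_right]
    rw [Finset.sum_congr rfl (fun j _ => hstep j), Finset.sum_range_sub
      (fun j => expWeight (lam + ((j : ℕ) : ℤ) • P.root i))]
    rw [hrefl, hm]
    push_cast
    simp only [Nat.cast_zero, zero_smul, add_zero, hm]
    have : lam - n • P.root i = lam + (-n) • P.root i := by module
    rw [this]
    abel
  · rw [demazureTerm, if_neg (by omega), if_neg (by omega)]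
    rw [hrefl, h, zero_smul, sub_zero, zero_mul, add_zero]
  · rw [demazureTerm, if_pos (by omega : 0 < P.coroot' i lam)]
    have hm : (n.toNat : ℤ) = n := Int.toNat_of_nonneg (by omega)
    rw [Finset.sum_mul]
    have : ∀ j ∈ Finset.range n.toNat,
        expWeight (lam - (j : ℤ) • P.root i) * (1 - expWeight (-(P.root i)))
        = expWeight (lam - (j : ℤ) • P.root i)
          - expWeight (lam - ((j + 1 : ℕ) : ℤ) • P.root i) := by
      intro j _
      rw [hfac]
      congr 2
      push_cast
      module
    rw [Finset.sum_congr rfl this, Finset.sum_range_sub'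
      (fun j => expWeight (lam - ((j : ℕ) : ℤ) • P.root i))]
    rw [hrefl, hm]
    push_cast
    simp only [Nat.cast_zero, zero_smul, sub_zero]
    abel

lemma key (x : AddMonoidAlgebra ℤ M) :
    TOne P i x + TZero P i x * (1 - expWeight (-(P.root i))) = x := by
  induction x using AddMonoidAlgebra.induction_linear with
  | zero => simp
  | add f g hf hg =>
    rw [map_add, map_add, add_mul]
    calc TOne P i f + TOne P i g
        + (TZero P i f * (1 - expWeight (-P.root i)) + TZero P i g * (1 - expWeight (-P.root i)))
        = (TOne P i f + TZero P i f * (1 - expWeight (-P.root i)))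
          + (TOne P i g + TZero P i g * (1 - expWeight (-P.root i))) := by ring
      _ = f + g := by rw [hf, hg]
  | single a b =>
    rw [single_eq_smul_exp, map_smul, map_smul, TOne_exp, TZero_exp, smul_mul_assoc,
      ← smul_add, key_exp]

noncomputable def TOneHom : AddMonoidAlgebra ℤ M →+* AddMonoidAlgebra ℤ M where
  toFun := TOne P i
  map_one' := TOne_one P i
  map_mul' := TOne_mul P i
  map_zero' := map_zero _
  map_add' := map_add _

lemma TOneHom_apply (x : AddMonoidAlgebra ℤ M) : TOneHom P i x = TOne P i x := rfl

lemma TOne_ite (c : Prop) [Decidable c] (x : AddMonoidAlgebra ℤ M) :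
    TOne P i (if c then x else 0) = if c then TOne P i x else 0 := by
  split <;> simp

lemma TOne_ite_one (c : Prop) [Decidable c] (x : AddMonoidAlgebra ℤ M) :
    TOne P i (if c then x else 1) = if c then TOne P i x else 1 := by
  split <;> simp [TOne_one]

lemma Tsel_true : Tsel P i true = TOne P i := rfl

lemma Tsel_false : Tsel P i false = TZero P i := rfl

lemma Rcoef_succ {k : ℕ} (μ : Fin (k+1) → ι) (ε : Fin (k+1) → Bool) (lam : M) :
    Rcoef P μ ε lam = Tsel P (μ 0) (ε 0) (Rcoef P (Fin.tail μ) (Fin.tail ε) lam) := by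
  rw [Rcoef, List.finRange_succ, List.map_cons, List.foldr_cons, List.map_map]
  rfl

lemma weylUpTo_zero {k : ℕ} (μ : Fin k → ι) (ε : Fin k → Bool) :
    weylUpTo P μ ε 0 = 1 := by
  simp [weylUpTo]

lemma weylUpTo_succ {k : ℕ} (μ : Fin (k+1) → ι) (ε : Fin (k+1) → Bool) (m : ℕ) :
    weylUpTo P μ ε (m + 1)
      = (if ε 0 = true then P.reflection (μ 0) else 1)
        * weylUpTo P (Fin.tail μ) (Fin.tail ε) m := by
  rw [weylUpTo, List.finRange_succ, List.take_succ_cons, ← List.map_take, List.filter_cons]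
  by_cases h : ε 0 = true
  · rw [if_pos h, if_pos (by simpa using h), List.map_cons, List.prod_cons]
    rw [List.filter_map, List.map_map]
    rfl
  · rw [if_neg h, if_neg (by simpa using h), one_mul]
    rw [List.filter_map, List.map_map]
    rfl

lemma lequiv_mul_apply (a b : M ≃ₗ[ℤ] M) (x : M) : (a * b) x = a (b x) := rfl

lemma lequiv_one_apply (x : M) : (1 : M ≃ₗ[ℤ] M) x = x := rfl

lemma consEquiv_eq {n : ℕ} (p : Bool × (Fin n → Bool)) :
    (Fin.consEquiv fun _ => Bool) p = Fin.cons p.1 p.2 := rfl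

end Aux

/-- the restriction-to-fixed-points form of the decomposition of the line
bundle `L_λ` on the Bott–Samelson variety `Γ(μ_1,…,μ_k)`: at every fixed point `ε`,
`e^{v(ε)λ} = ∑_{ε ≤ ε'} R^{λ,ε'} ∏_{ε'_i = 0} (1 - e^{-α_i(ε)})`,
where `α_i(ε) = v_i(ε)·μ_i`. -/
theorem bott_samelson_line_bundle_restriction
    {ι M N : Type*} [AddCommGroup M] [Module.Free ℤ M] [Module.Finite ℤ M]
    [AddCommGroup N] (P : RootPairing ι ℤ M N)
    (k : ℕ) (μ : Fin k → ι) (lam : M) (ε : Fin k → Bool) :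
    expWeight (weylUpTo P μ ε k lam)
      = ∑ ε' ∈ Finset.univ.filter
            (fun ε' : Fin k → Bool => ∀ i, ε i = true → ε' i = true),
          Rcoef P μ ε' lam
            * ∏ i ∈ Finset.univ.filter (fun i : Fin k => ε' i = false),
                (1 - expWeight (-(weylUpTo P μ ε (i.val + 1) (P.root (μ i))))) := by
  induction k with
  | zero =>
    rw [Finset.filter_true_of_mem (fun x _ i => i.elim0), Finset.univ_unique,
      Finset.sum_singleton]
    have h1 : (Finset.univ : Finset (Fin 0)) = ∅ := rfl
    rw [h1, Finset.filter_empty, Finset.prod_empty, mul_one, weylUpTo_zero,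
      lequiv_one_apply]
    rfl
  | succ k IH =>
    have IH' := IH (Fin.tail μ) (Fin.tail ε)
    rw [Finset.sum_filter] at IH'
    simp only [Finset.prod_filter, Fin.tail] at IH'
    simp only [Finset.prod_filter]
    rw [Finset.sum_filter, ← Equiv.sum_comp (Fin.consEquiv fun _ : Fin (k+1) => Bool),
      Fintype.sum_prod_type, Fintype.sum_bool]
    simp only [consEquiv_eq, Finset.prod_filter, Fin.prod_univ_succ, Fin.forall_fin_succ,
      Fin.cons_zero, Fin.cons_succ, Rcoef_succ, Fin.tail_cons, Fin.val_succ, Fin.val_zero,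
      weylUpTo_succ, weylUpTo_zero, mul_one, lequiv_mul_apply, lequiv_one_apply, Fin.tail]
    by_cases hb : ε 0 = true
    · simp only [hb, Tsel_true, Tsel_false, if_pos, reduceIte, true_and, one_mul,
        Bool.true_eq_false, Bool.false_eq_true, false_and, if_false, Finset.sum_const_zero,
        add_zero, forall_const, imp_false, if_true]
      rw [← TOne_exp, IH', ← TOneHom_apply, map_sum]
      apply Finset.sum_congr rfl
      intro x _
      rw [TOneHom_apply, TOne_ite]
      congr 1
      rw [← TOneHom_apply, map_mul, map_prod]
      congr 1
      apply Finset.prod_congr rfl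
      intro j _
      rw [TOneHom_apply, TOne_ite_one]
      congr 1
      rw [map_sub, TOne_one, TOne_exp, map_neg]
    · simp only [hb, Tsel_true, Tsel_false, Bool.false_eq_true, false_implies, true_and,
        Bool.true_eq_false, reduceIte, one_mul, lequiv_one_apply]
      rw [← Finset.sum_add_distrib, IH']
      apply Finset.sum_congr rfl
      intro x _
      by_cases hc : ∀ i : Fin k, ε i.succ = true → x i = true
      · rw [if_pos hc, if_pos hc, if_pos hc]
        conv_lhs => rw [← key P (μ 0) (Rcoef P (Fin.tail μ) x lam)]
        ring
      · rw [if_neg hc, if_neg hc, if_neg hc, add_zero]
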